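/- arXiv:1911.05867 — 3 statements merged into one kernel-verified Lean document; each statement's English description precedes it below -/
import Mathlib

section
/- Let d ≥ 2 be an integer and let 0 < a < r be real numbers. Then ∫₀^π (sin φ)^{d−2} (a² − 2ar cos φ + r²)^{−d/2} dφ = B((d−1)/2, 1/2) · r^{2−d} / (r² − a²), where B(x,y) = Γ(x)Γ(y)/Γ(x+y) is the Beta function. -/
open MeasureTheory Metric Set Real Filter

open intervalIntegral in

lemma sinPowInt (n : ℕ) : ∫ x in (0:ℝ)..π, Real.sin x ^ n
    = Real.Gamma (((n:ℝ)+1)/2) * Real.Gamma (1/2) / Real.Gamma (((n:ℝ)+1)/2 + 1/2) := by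
  induction n using Nat.twoStepInduction with
  | zero =>
    simp only [Nat.cast_zero, pow_zero, integral_one, sub_zero, zero_add]
    norm_num [Real.Gamma_one, Real.Gamma_one_half_eq, Real.mul_self_sqrt Real.pi_pos.le]
  | one =>
    simp only [pow_one, integral_sin, Real.cos_zero, Real.cos_pi]
    norm_num
    rw [show (3:ℝ)/2 = 1/2 + 1 by ring, Real.Gamma_add_one (by norm_num),
      Real.Gamma_one_half_eq]
    have : (0:ℝ) < √π := Real.sqrt_pos.mpr Real.pi_pos
    field_simp
  | more n ih _ =>
    rw [integral_sin_pow]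
    simp only [Real.sin_zero, Real.sin_pi]
    rw [zero_pow (by omega), ih]
    have h1 : ((↑(n+2):ℝ)+1)/2 = ((n:ℝ)+1)/2 + 1 := by push_cast; ring
    have h2 : ((↑(n+2):ℝ)+1)/2 + 1/2 = (((n:ℝ)+1)/2 + 1/2) + 1 := by push_cast; ring
    rw [h2, h1, Real.Gamma_add_one (by positivity), Real.Gamma_add_one (by positivity)]
    have hA : 0 < Real.Gamma (((n:ℝ)+1)/2) := Real.Gamma_pos_of_pos (by positivity)
    have hB : 0 < Real.Gamma (((n:ℝ)+1)/2 + 1/2) := Real.Gamma_pos_of_pos (by positivity)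
    have hn2 : ((n:ℝ)+2) ≠ 0 := by positivity
    field_simp
    ring


lemma Qpos (p q : ℝ) (hp : 0 < p) (hq : 0 < q) (hpq : p ≠ q) (t : ℝ) :
    0 < p^2 - 2*p*q*Real.cos t + q^2 := by
  have hne : p - q ≠ 0 := sub_ne_zero.mpr hpq
  have h1 : 0 < (p - q)^2 := by positivity
  nlinarith [Real.cos_le_one t, mul_pos hp hq]

lemma valEq (p q cp sp s : ℝ) (hs : 0 < s) (hsin : 0 < sp) (hq : 0 < q)
    (hQ : s^2 = p^2 - 2*p*q*cp + q^2) :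
    -(1/(q*sp/s)) * ((q*sp*s - (p - q*cp)*(2*p*q*sp/(2*s)))/s^2)
      = -(q*(q - p*cp))/(p^2 - 2*p*q*cp + q^2) := by
  rw [← hQ]
  have h1 : s ≠ 0 := hs.ne'
  have h2 : sp ≠ 0 := hsin.ne'
  have h3 : q ≠ 0 := hq.ne'
  field_simp
  linear_combination (-1) * hQ

lemma keyDeriv (p q : ℝ) (hp : 0 < p) (hq : 0 < q) (hpq : p ≠ q) {φ : ℝ}
    (h0 : 0 < φ) (hπ : φ < π) :
    HasDerivAt (fun t => Real.arccos ((p - q * Real.cos t) / √(p^2 - 2*p*q*Real.cos t + q^2)))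
      (-(q * (q - p * Real.cos φ)) / (p^2 - 2*p*q*Real.cos φ + q^2)) φ := by
  have hQ : ∀ t, 0 < p^2 - 2*p*q*Real.cos t + q^2 := Qpos p q hp hq hpq
  have hQφ : 0 < p^2 - 2*p*q*Real.cos φ + q^2 := hQ φ
  set Q : ℝ := p^2 - 2*p*q*Real.cos φ + q^2 with hQdef
  have hsQ : 0 < √Q := Real.sqrt_pos.mpr hQφ
  have hsq : (√Q)^2 = Q := Real.sq_sqrt hQφ.le
  have hsin : 0 < Real.sin φ := Real.sin_pos_of_pos_of_lt_pi h0 hπ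
  have hcos2 : Real.cos φ ^ 2 < 1 := by nlinarith [Real.sin_sq_add_cos_sq φ]
  have hf : HasDerivAt (fun t => p - q * Real.cos t) (q * Real.sin φ) φ := by
    simpa using ((Real.hasDerivAt_cos φ).const_mul q).const_sub p
  have hQd : HasDerivAt (fun t => p^2 - 2*p*q*Real.cos t + q^2) (2*p*q*Real.sin φ) φ := by
    have := (((Real.hasDerivAt_cos φ).const_mul (2*p*q)).const_sub (p^2)).add_const (q^2)
    refine this.congr_deriv ?_
    ring
  have hg : HasDerivAt (fun t => √(p^2 - 2*p*q*Real.cos t + q^2))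
      (2*p*q*Real.sin φ / (2 * √Q)) φ := hQd.sqrt hQφ.ne'
  have hc : HasDerivAt (fun t => (p - q * Real.cos t) / √(p^2 - 2*p*q*Real.cos t + q^2))
      ((q * Real.sin φ * √Q - (p - q * Real.cos φ) * (2*p*q*Real.sin φ / (2 * √Q))) / (√Q)^2) φ :=
    hf.div hg hsQ.ne'
  set c : ℝ := (p - q * Real.cos φ) / √Q with hcdef
  have hc2 : c^2 < 1 := by
    rw [hcdef, div_pow, hsq, div_lt_one hQφ]
    nlinarith [mul_pos hq hq]
  have hne1 : c ≠ 1 := fun h => by rw [h] at hc2; norm_num at hc2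
  have hneg1 : c ≠ -1 := fun h => by rw [h] at hc2; norm_num at hc2
  have harccos := (Real.hasDerivAt_arccos hneg1 hne1).comp φ hc
  have hs1c : √(1 - c^2) = q * Real.sin φ / √Q := by
    rw [show 1 - c^2 = (q * Real.sin φ / √Q)^2 by
      rw [hcdef]
      field_simp
      nlinarith [Real.sin_sq_add_cos_sq φ]]
    exact Real.sqrt_sq (by positivity)
  refine harccos.congr_deriv ?_
  rw [hs1c, hQdef]
  linarith [(valEq p q (Real.cos φ) (Real.sin φ) (√Q) hsQ hsin hq hsq)]

lemma sinArccosQ (p q : ℝ) (hp : 0 < p) (hq : 0 < q) (hpq : p ≠ q) {φ : ℝ}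
    (h0 : 0 < φ) (hπ : φ < π) :
    Real.sin (Real.arccos ((p - q * Real.cos φ) / √(p^2 - 2*p*q*Real.cos φ + q^2)))
      = q * Real.sin φ / √(p^2 - 2*p*q*Real.cos φ + q^2) := by
  have hQφ : 0 < p^2 - 2*p*q*Real.cos φ + q^2 := Qpos p q hp hq hpq φ
  have hsQ : 0 < √(p^2 - 2*p*q*Real.cos φ + q^2) := Real.sqrt_pos.mpr hQφ
  have hsq : (√(p^2 - 2*p*q*Real.cos φ + q^2))^2 = p^2 - 2*p*q*Real.cos φ + q^2 :=
    Real.sq_sqrt hQφ.le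
  have hsin : 0 < Real.sin φ := Real.sin_pos_of_pos_of_lt_pi h0 hπ
  rw [Real.sin_arccos]
  rw [show 1 - ((p - q * Real.cos φ) / √(p^2 - 2*p*q*Real.cos φ + q^2))^2
      = (q * Real.sin φ / √(p^2 - 2*p*q*Real.cos φ + q^2))^2 by
    rw [div_pow, div_pow, hsq, eq_div_iff hQφ.ne', sub_mul, div_mul_cancel₀ _ hQφ.ne']
    nlinarith [Real.sin_sq_add_cos_sq φ]]
  exact Real.sqrt_sq (by positivity)

lemma rpowHalf (n : ℕ) {Q : ℝ} (hQ : 0 < Q) :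
    Q ^ (-((n:ℝ)+2)/2) = (√Q ^ (n+2))⁻¹ := by
  rw [Real.sqrt_eq_rpow, ← Real.rpow_natCast (Q ^ ((1:ℝ)/2)) (n+2), ← Real.rpow_mul hQ.le,
    ← Real.rpow_neg hQ.le]
  congr 1
  push_cast
  ring

/-- `∫₀^π (sin φ)^{d−2} (a² − 2ar cos φ + r²)^{−d/2} dφ
      = B((d−1)/2, 1/2) · r^{2−d} / (r² − a²)` for `0 < a < r`. -/
theorem stmt3 (d : ℕ) (hd : 2 ≤ d) (a r : ℝ) (ha : 0 < a) (har : a < r) :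
    ∫ φ in (0 : ℝ)..π, (Real.sin φ) ^ (d - 2) *
        (a ^ 2 - 2 * a * r * Real.cos φ + r ^ 2) ^ (-(d : ℝ) / 2)
      = (Real.Gamma (((d : ℝ) - 1) / 2) * Real.Gamma (1 / 2) /
          Real.Gamma (((d : ℝ) - 1) / 2 + 1 / 2)) * r ^ ((2 : ℝ) - d) / (r ^ 2 - a ^ 2) := by
  obtain ⟨n, rfl⟩ : ∃ n, d = n + 2 := ⟨d - 2, by omega⟩
  have hr : 0 < r := ha.trans har
  have hQ : ∀ t, 0 < a^2 - 2*a*r*Real.cos t + r^2 := Qpos a r ha hr har.ne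
  have hra : (0:ℝ) < r^2 - a^2 := by nlinarith
  set ψ : ℝ → ℝ := fun t =>
    Real.arccos ((a - r * Real.cos t) / √(a^2 - 2*a*r*Real.cos t + r^2)) with hψdef
  set χ : ℝ → ℝ := fun t =>
    Real.arccos ((r - a * Real.cos t) / √(a^2 - 2*a*r*Real.cos t + r^2)) with hχdef
  set G : ℝ → ℝ := fun u => ∫ x in (0:ℝ)..u, Real.sin x ^ n with hGdef
  have hGd : ∀ u, HasDerivAt G (Real.sin u ^ n) u := fun u =>
    ((Real.continuous_sin.pow n).integral_hasStrictDerivAt 0 u).hasDerivAt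
  have hGcont : Continuous G :=
    continuous_iff_continuousAt.mpr fun u => (hGd u).continuousAt
  set F : ℝ → ℝ := fun t =>
    ((a^n)⁻¹ * G (χ t) - (r^n)⁻¹ * G (ψ t)) / (r^2 - a^2) with hFdef
  set f' : ℝ → ℝ := fun φ =>
    Real.sin φ ^ n * (a^2 - 2*a*r*Real.cos φ + r^2) ^ (-(((n+2:ℕ)):ℝ)/2) with hf'def
  -- continuity pieces
  have hQcont : Continuous fun t => a^2 - 2*a*r*Real.cos t + r^2 := by fun_prop
  have hsQcont : Continuous fun t => √(a^2 - 2*a*r*Real.cos t + r^2) :=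
    Real.continuous_sqrt.comp hQcont
  have hsQne : ∀ t, √(a^2 - 2*a*r*Real.cos t + r^2) ≠ 0 :=
    fun t => (Real.sqrt_pos.mpr (hQ t)).ne'
  have hψcont : Continuous ψ :=
    Real.continuous_arccos.comp ((by fun_prop : Continuous fun t => a - r * Real.cos t).div
      hsQcont hsQne)
  have hχcont : Continuous χ :=
    Real.continuous_arccos.comp ((by fun_prop : Continuous fun t => r - a * Real.cos t).div
      hsQcont hsQne)
  have hFcont : Continuous F :=
    ((continuous_const.mul (hGcont.comp hχcont)).sub
      (continuous_const.mul (hGcont.comp hψcont))).div_const _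
  have hf'cont : Continuous f' := by
    apply (Real.continuous_sin.pow n).mul
    exact continuous_iff_continuousAt.mpr fun t =>
      hQcont.continuousAt.rpow_const (Or.inl (hQ t).ne')
  -- the derivative
  have hFderiv : ∀ φ ∈ Ioo (0:ℝ) π, HasDerivAt F (f' φ) φ := by
    rintro φ ⟨h0, hπ⟩
    have hψd := keyDeriv a r ha hr har.ne h0 hπ
    have hχd' := keyDeriv r a hr ha har.ne' h0 hπ
    simp only [show ∀ t:ℝ, r^2 - 2*r*a*Real.cos t + a^2 = a^2 - 2*a*r*Real.cos t + r^2
      from fun t => by ring] at hχd'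
    have hDψ := (hGd (ψ φ)).comp φ hψd
    have hDχ := (hGd (χ φ)).comp φ hχd'
    have hD := (((hDχ.const_mul ((a^n)⁻¹)).sub (hDψ.const_mul ((r^n)⁻¹))).div_const (r^2 - a^2))
    refine hD.congr_deriv (Eq.symm ?_)
    -- value computation
    have hsψ := sinArccosQ a r ha hr har.ne h0 hπ
    have hsχ' := sinArccosQ r a hr ha har.ne' h0 hπ
    simp only [show ∀ t:ℝ, r^2 - 2*r*a*Real.cos t + a^2 = a^2 - 2*a*r*Real.cos t + r^2
      from fun t => by ring] at hsχ'
    show f' φ = _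
    rw [hf'def]
    simp only []
    rw [hψdef, hχdef]
    simp only []
    rw [hsψ, hsχ']
    have hQφ := hQ φ
    have hsQφ : 0 < √(a^2 - 2*a*r*Real.cos φ + r^2) := Real.sqrt_pos.mpr hQφ
    have hsqφ : (√(a^2 - 2*a*r*Real.cos φ + r^2))^2 = a^2 - 2*a*r*Real.cos φ + r^2 :=
      Real.sq_sqrt hQφ.le
    rw [show (-(((n+2:ℕ)):ℝ)/2) = (-((n:ℝ)+2)/2) by push_cast; ring, rpowHalf n hQφ]
    rw [← hsqφ]
    set s := √(a^2 - 2*a*r*Real.cos φ + r^2) with hs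
    have hsne : s ≠ 0 := hsQφ.ne'
    rw [Real.sqrt_sq hsQφ.le]
    field_simp
    have hsn : s^n * s⁻¹^n = 1 := by rw [← mul_pow, mul_inv_cancel₀ hsne, one_pow]
    linear_combination (-(-(Real.sin φ ^ n * a ^ 2 * a ^ n * s ^ 2 * r ^ n) + Real.sin φ ^ n * a ^ n * s ^ 2 * r ^ 2 * r ^ n)) * hsn
  have hInt : IntervalIntegrable f' volume 0 π := hf'cont.intervalIntegrable 0 π
  have hFTC := intervalIntegral.integral_eq_sub_of_hasDeriv_right_of_le Real.pi_pos.le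
    hFcont.continuousOn (fun x hx => (hFderiv x hx).hasDerivWithinAt) hInt
  -- endpoint values
  have hrma : (0:ℝ) < r - a := by linarith
  have hrpa : (0:ℝ) < a + r := by linarith
  have hψ0 : ψ 0 = π := by
    rw [hψdef]
    simp only [Real.cos_zero]
    rw [show a^2 - 2*a*r*(1:ℝ) + r^2 = (r-a)^2 by ring, Real.sqrt_sq hrma.le,
      show (a - r*1)/(r-a) = -1 by rw [div_eq_iff hrma.ne']; ring]
    exact Real.arccos_neg_one
  have hψπ : ψ π = 0 := by
    rw [hψdef]
    simp only [Real.cos_pi]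
    rw [show a^2 - 2*a*r*(-1:ℝ) + r^2 = (a+r)^2 by ring, Real.sqrt_sq hrpa.le,
      show (a - r*(-1))/(a+r) = 1 by rw [div_eq_iff hrpa.ne']; ring]
    exact Real.arccos_one
  have hχ0 : χ 0 = 0 := by
    rw [hχdef]
    simp only [Real.cos_zero]
    rw [show a^2 - 2*a*r*(1:ℝ) + r^2 = (r-a)^2 by ring, Real.sqrt_sq hrma.le,
      show (r - a*1)/(r-a) = 1 by rw [div_eq_iff hrma.ne']; ring]
    exact Real.arccos_one
  have hχπ : χ π = 0 := by
    rw [hχdef]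
    simp only [Real.cos_pi]
    rw [show a^2 - 2*a*r*(-1:ℝ) + r^2 = (a+r)^2 by ring, Real.sqrt_sq hrpa.le,
      show (r - a*(-1))/(a+r) = 1 by rw [div_eq_iff hrpa.ne']; ring]
    exact Real.arccos_one
  have hG0 : G 0 = 0 := intervalIntegral.integral_same
  -- assemble
  have hLHS : (∫ φ in (0:ℝ)..π, f' φ) = (r^n)⁻¹ * G π / (r^2 - a^2) := by
    rw [hFTC, hFdef]
    simp only []
    rw [hψ0, hψπ, hχ0, hχπ, hG0]
    ring
  have hcast : ((↑(n+2):ℝ) - 1)/2 = ((n:ℝ)+1)/2 := by push_cast; ring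
  have hrpow : r ^ ((2:ℝ) - (↑(n+2):ℝ)) = (r^n)⁻¹ := by
    rw [show (2:ℝ) - (↑(n+2):ℝ) = -(n:ℝ) by push_cast; ring, Real.rpow_neg hr.le,
      Real.rpow_natCast]
  calc ∫ φ in (0:ℝ)..π, (Real.sin φ) ^ (n+2-2) *
        (a^2 - 2*a*r*Real.cos φ + r^2) ^ (-(↑(n+2):ℝ)/2)
      = ∫ φ in (0:ℝ)..π, f' φ := by
        simp only [Nat.add_sub_cancel, hf'def]
    _ = (r^n)⁻¹ * G π / (r^2 - a^2) := hLHS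
    _ = _ := by
        rw [hGdef]
        simp only []
        rw [sinPowInt n, hcast, hrpow]
        ring
end

section
/- Let d ≥ 2 be an integer, let α ∈ (0,2), let R > 1, let S ⊆ S^{d-1} be a closed set, and let θ ∈ S^{d-1} with θ ∉ S. Then the double integral ∫_{{y ∈ ℝ^d : 1 < |y| < R}} ∫_{S} (|y|² − 1)^{α} |θ − y|^{−d} |φ − y|^{−d} σ₁(dφ) dy is finite. -/
open MeasureTheory Metric Set Real Filter
open scoped ENNReal

lemma finite_lint_rpow_ball {E : Type*} [NormedAddCommGroup E] [NormedSpace ℝ E]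
    [FiniteDimensional ℝ E] [MeasurableSpace E] [BorelSpace E]
    (μ : Measure E) [μ.IsAddHaarMeasure] {s : ℝ}
    (hs : -(Module.finrank ℝ E : ℝ) < s) (hs0 : s < 0) (b : ℝ) :
    ∫⁻ x in Metric.ball (0 : E) b, ENNReal.ofReal (‖x‖ ^ s) ∂μ < ⊤ := by
  set n : ℕ := Module.finrank ℝ E
  have hmeas : Measurable fun x : E => ‖x‖ ^ s := by fun_prop
  rw [lintegral_eq_lintegral_meas_le _
    (Eventually.of_forall fun x => rpow_nonneg (norm_nonneg x) s) hmeas.aemeasurable]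
  have hsub : ∀ t : ℝ, 0 < t → {a : E | t ≤ ‖a‖ ^ s} ⊆ Metric.closedBall 0 (t ^ s⁻¹) := by
    intro t ht a ha
    simp only [mem_setOf_eq] at ha
    rcases eq_or_lt_of_le (norm_nonneg a) with h0 | h0
    · rw [← h0, Real.zero_rpow hs0.ne] at ha; linarith
    · have h1 : (‖a‖ ^ s) ^ s⁻¹ ≤ t ^ s⁻¹ :=
        Real.rpow_le_rpow_of_nonpos ht ha (inv_nonpos.2 hs0.le)
      rw [← Real.rpow_mul h0.le, mul_inv_cancel₀ hs0.ne, Real.rpow_one] at h1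
      simpa [mem_closedBall_zero_iff] using h1
  have hbound : ∀ t : ℝ, 0 < t →
      (μ.restrict (Metric.ball (0 : E) b)) {a : E | t ≤ ‖a‖ ^ s}
        ≤ ENNReal.ofReal (t ^ (s⁻¹ * n)) * μ (Metric.ball (0 : E) 1) := by
    intro t ht
    calc (μ.restrict (Metric.ball (0 : E) b)) {a : E | t ≤ ‖a‖ ^ s}
        ≤ μ (Metric.closedBall 0 (t ^ s⁻¹)) :=
          le_trans (Measure.restrict_le_self _) (measure_mono (hsub t ht))
      _ = ENNReal.ofReal ((t ^ s⁻¹) ^ n) * μ (Metric.ball (0 : E) 1) :=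
          μ.addHaar_closedBall 0 (by positivity)
      _ = ENNReal.ofReal (t ^ (s⁻¹ * n)) * μ (Metric.ball (0 : E) 1) := by
          rw [← Real.rpow_natCast (t ^ s⁻¹) n, ← Real.rpow_mul ht.le]
  calc ∫⁻ t in Ioi (0:ℝ), (μ.restrict (Metric.ball (0 : E) b)) {a : E | t ≤ ‖a‖ ^ s}
      ≤ ∫⁻ t in Ioc (0:ℝ) 1 ∪ Ioi 1, (μ.restrict (Metric.ball (0 : E) b)) {a : E | t ≤ ‖a‖ ^ s} :=
        lintegral_mono_set Ioi_subset_Ioc_union_Ioi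
    _ ≤ (∫⁻ t in Ioc (0:ℝ) 1, (μ.restrict (Metric.ball (0 : E) b)) {a : E | t ≤ ‖a‖ ^ s})
        + ∫⁻ t in Ioi (1:ℝ), (μ.restrict (Metric.ball (0 : E) b)) {a : E | t ≤ ‖a‖ ^ s} :=
        lintegral_union_le _ _ _
    _ < ⊤ := by
        refine ENNReal.add_lt_top.2 ⟨?_, ?_⟩
        · calc (∫⁻ t in Ioc (0:ℝ) 1, (μ.restrict (Metric.ball (0 : E) b)) {a : E | t ≤ ‖a‖ ^ s})
              ≤ ∫⁻ _ in Ioc (0:ℝ) 1, μ (Metric.ball (0 : E) b) := by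
                refine lintegral_mono fun t => ?_
                exact le_trans (measure_mono (subset_univ _))
                  (le_of_eq (Measure.restrict_apply_univ _))
            _ = μ (Metric.ball (0 : E) b) * volume (Ioc (0:ℝ) 1) := by
                rw [lintegral_const, Measure.restrict_apply_univ]
            _ < ⊤ := ENNReal.mul_lt_top measure_ball_lt_top (by simp)
        · have hexp : s⁻¹ * n < -1 := by
            rw [inv_mul_eq_div, div_lt_iff_of_neg hs0]
            linarith
          calc (∫⁻ t in Ioi (1:ℝ), (μ.restrict (Metric.ball (0 : E) b)) {a : E | t ≤ ‖a‖ ^ s})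
              ≤ ∫⁻ t in Ioi (1:ℝ), ENNReal.ofReal (t ^ (s⁻¹ * n)) * μ (Metric.ball (0 : E) 1) := by
                exact setLIntegral_mono' measurableSet_Ioi fun t ht => hbound t (lt_trans one_pos ht)
            _ = (∫⁻ t in Ioi (1:ℝ), ENNReal.ofReal (t ^ (s⁻¹ * n))) * μ (Metric.ball (0 : E) 1) :=
                lintegral_mul_const' _ _ measure_ball_lt_top.ne
            _ < ⊤ := ENNReal.mul_lt_top
                ((integrableOn_Ioi_rpow_of_lt hexp one_pos).setLIntegral_lt_top)
                measure_ball_lt_top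

lemma lint_rpow_ball_translate {E : Type*} [NormedAddCommGroup E] [NormedSpace ℝ E]
    [FiniteDimensional ℝ E] [MeasurableSpace E] [BorelSpace E]
    (μ : Measure E) [μ.IsAddHaarMeasure] (s b : ℝ) (c : E) :
    ∫⁻ x in Metric.ball c b, ENNReal.ofReal (‖c - x‖ ^ s) ∂μ
      = ∫⁻ x in Metric.ball (0 : E) b, ENNReal.ofReal (‖x‖ ^ s) ∂μ := by
  have hmp : MeasurePreserving (fun x : E => x + c) μ μ := measurePreserving_add_right μ c
  have hemb : MeasurableEmbedding (fun x : E => x + c) :=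
    (MeasurableEquiv.addRight c).measurableEmbedding
  have hpre : (fun x : E => x + c) ⁻¹' Metric.ball c b = Metric.ball (0 : E) b := by
    ext x; simp [mem_ball, dist_eq_norm]
  have h := hmp.setLIntegral_comp_preimage_emb hemb
    (fun x => ENNReal.ofReal (‖c - x‖ ^ s)) (Metric.ball c b)
  rw [hpre] at h
  rw [← h]
  have h2 : ∀ x : E, ‖c - (x + c)‖ = ‖x‖ := fun x => by
    rw [show c - (x + c) = -x by abel, norm_neg]
  simp_rw [h2]

/-- The uniform probability measure on the unit sphere in `ℝ^d`, viewed as a measure on `ℝ^d`. -/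
noncomputable def unifSphere (d : ℕ) : Measure (EuclideanSpace ℝ (Fin d)) :=
  let ν : Measure (EuclideanSpace ℝ (Fin d)) :=
    ((volume : Measure (EuclideanSpace ℝ (Fin d))).toSphere).map Subtype.val
  (ν Set.univ)⁻¹ • ν

set_option maxHeartbeats 1000000 in
/-- For `θ ∈ S^{d-1} \ S`, the double integral
`∫_{1<|y|<R} ∫_S (|y|²−1)^α |θ−y|^{−d} |φ−y|^{−d} σ₁(dφ) dy` is finite. -/
theorem stmt8 (d : ℕ) (hd : 2 ≤ d) (α : ℝ) (hα : α ∈ Set.Ioo (0 : ℝ) 2) (R : ℝ) (hR : 1 < R)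
    (S : Set (EuclideanSpace ℝ (Fin d))) (hS : IsClosed S)
    (hSsub : S ⊆ sphere (0 : EuclideanSpace ℝ (Fin d)) 1)
    (θ : EuclideanSpace ℝ (Fin d)) (hθ : ‖θ‖ = 1) (hθS : θ ∉ S) :
    ∫⁻ y in {y : EuclideanSpace ℝ (Fin d) | 1 < ‖y‖ ∧ ‖y‖ < R},
        ∫⁻ φ in S,
          ENNReal.ofReal ((‖y‖ ^ 2 - 1) ^ α * ‖θ - y‖ ^ (-(d : ℝ)) * ‖φ - y‖ ^ (-(d : ℝ)))
          ∂(unifSphere d) < ⊤ := by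
  obtain ⟨hα0, hα2⟩ := hα
  have hd2 : (2:ℝ) ≤ (d:ℝ) := by exact_mod_cast hd
  have hαd0 : α - (d:ℝ) < 0 := by linarith
  have hαd1 : -(d:ℝ) < α - (d:ℝ) := by linarith
  set A : Set (EuclideanSpace ℝ (Fin d)) := {y | 1 < ‖y‖ ∧ ‖y‖ < R} with hA_def
  have hAmeas : MeasurableSet A := by
    have : A = norm ⁻¹' (Ioo (1:ℝ) R) := rfl
    rw [this]
    exact measurable_norm measurableSet_Ioo
  -- the sphere measure is (sub-)probability
  have hσ1 : unifSphere d Set.univ ≤ 1 := by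
    simp only [unifSphere, Measure.smul_apply, smul_eq_mul]
    exact ENNReal.inv_mul_le_one _
  haveI : IsFiniteMeasure (unifSphere d) := ⟨lt_of_le_of_lt hσ1 ENNReal.one_lt_top⟩
  have hσS : unifSphere d S ≤ 1 := le_trans (measure_mono (subset_univ S)) hσ1
  rcases S.eq_empty_or_nonempty with rfl | hSne
  · simp
  have hεpos : 0 < infDist θ S := (hS.notMem_iff_infDist_pos hSne).1 hθS
  set e : ℝ := infDist θ S / 2 with he_def
  have he : 0 < e := by positivity
  have hsep : ∀ φ ∈ S, 2 * e ≤ ‖θ - φ‖ := by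
    intro φ hφ
    have h : infDist θ S ≤ dist θ φ := infDist_le_dist_of_mem hφ
    rw [dist_eq_norm] at h
    rw [he_def]; linarith
  have hdnn : -(d:ℝ) ≤ 0 := neg_nonpos.2 (Nat.cast_nonneg d)
  set C1 : ℝ := (R + 1) ^ α * e ^ (-(d:ℝ)) with hC1_def
  set C2 : ℝ := (R ^ 2 - 1) ^ α * (e ^ (-(d:ℝ)) * e ^ (-(d:ℝ))) with hC2_def
  have hR2 : (0:ℝ) ≤ R ^ 2 - 1 := by
    have h : (1:ℝ) ^ 2 ≤ R ^ 2 := pow_le_pow_left₀ (by norm_num) hR.le 2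
    rw [one_pow] at h; linarith
  have hC1n : 0 ≤ C1 := by positivity
  have hC2n : 0 ≤ C2 :=
    mul_nonneg (rpow_nonneg hR2 _) (mul_nonneg (rpow_nonneg he.le _) (rpow_nonneg he.le _))
  -- pointwise bound
  have key : ∀ y : EuclideanSpace ℝ (Fin d), 1 < ‖y‖ → ‖y‖ < R → ∀ φ ∈ S,
      (‖y‖ ^ 2 - 1) ^ α * ‖θ - y‖ ^ (-(d:ℝ)) * ‖φ - y‖ ^ (-(d:ℝ))
        ≤ C1 * ‖θ - y‖ ^ (α - (d:ℝ)) + C1 * ‖φ - y‖ ^ (α - (d:ℝ)) + C2 := by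
    intro y hy1 hyR φ hφ
    have hφ1 : ‖φ‖ = 1 := by simpa [mem_sphere_zero_iff_norm] using hSsub hφ
    have hya : ‖y‖ - 1 ≤ ‖θ - y‖ := by
      have h := abs_norm_sub_norm_le θ y
      rw [hθ, abs_sub_comm] at h
      exact (le_abs_self _).trans h
    have hyb : ‖y‖ - 1 ≤ ‖φ - y‖ := by
      have h := abs_norm_sub_norm_le φ y
      rw [hφ1, abs_sub_comm] at h
      exact (le_abs_self _).trans h
    have ha : 0 < ‖θ - y‖ := lt_of_lt_of_le (by linarith) hya
    have hb : 0 < ‖φ - y‖ := lt_of_lt_of_le (by linarith) hyb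
    have htri : 2 * e ≤ ‖θ - y‖ + ‖φ - y‖ := by
      have h1 := hsep φ hφ
      have h2 : ‖θ - φ‖ ≤ ‖θ - y‖ + ‖φ - y‖ := by
        calc ‖θ - φ‖ = ‖(θ - y) + (y - φ)‖ := by rw [show θ - φ = (θ - y) + (y - φ) by abel]
          _ ≤ ‖θ - y‖ + ‖y - φ‖ := norm_add_le _ _
          _ = ‖θ - y‖ + ‖φ - y‖ := by rw [norm_sub_rev y φ]
      linarith
    have hsq0 : (0:ℝ) ≤ ‖y‖ ^ 2 - 1 := by
      have h : (1:ℝ) ^ 2 ≤ ‖y‖ ^ 2 := pow_le_pow_left₀ (by norm_num) hy1.le 2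
      rw [one_pow] at h; linarith
    have hterm1 : 0 ≤ C1 * ‖θ - y‖ ^ (α - (d:ℝ)) := mul_nonneg hC1n (rpow_nonneg ha.le _)
    have hterm2 : 0 ≤ C1 * ‖φ - y‖ ^ (α - (d:ℝ)) := mul_nonneg hC1n (rpow_nonneg hb.le _)
    by_cases hcase : ‖θ - y‖ < e
    · have hbe : e ≤ ‖φ - y‖ := by linarith
      have h1 : (‖y‖ ^ 2 - 1) ^ α ≤ (R + 1) ^ α * ‖θ - y‖ ^ α := by
        rw [← Real.mul_rpow (by linarith) ha.le]
        refine Real.rpow_le_rpow hsq0 ?_ hα0.le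
        have hstep : (‖y‖ + 1) * (‖y‖ - 1) ≤ (R + 1) * ‖θ - y‖ :=
          mul_le_mul (by linarith) hya (by linarith) (by linarith)
        calc ‖y‖ ^ 2 - 1 = (‖y‖ + 1) * (‖y‖ - 1) := by ring
          _ ≤ (R + 1) * ‖θ - y‖ := hstep
      have h2 : ‖φ - y‖ ^ (-(d:ℝ)) ≤ e ^ (-(d:ℝ)) :=
        Real.rpow_le_rpow_of_nonpos he hbe hdnn
      have hmain : (‖y‖ ^ 2 - 1) ^ α * ‖θ - y‖ ^ (-(d:ℝ)) * ‖φ - y‖ ^ (-(d:ℝ))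
          ≤ ((R + 1) ^ α * ‖θ - y‖ ^ α) * ‖θ - y‖ ^ (-(d:ℝ)) * e ^ (-(d:ℝ)) := by
        refine mul_le_mul (mul_le_mul h1 le_rfl (rpow_nonneg ha.le _) ?_) h2
          (rpow_nonneg hb.le _) ?_
        · exact mul_nonneg (rpow_nonneg (by linarith) _) (rpow_nonneg ha.le _)
        · exact mul_nonneg (mul_nonneg (rpow_nonneg (by linarith) _) (rpow_nonneg ha.le _))
            (rpow_nonneg ha.le _)
      have heq : ((R + 1) ^ α * ‖θ - y‖ ^ α) * ‖θ - y‖ ^ (-(d:ℝ)) * e ^ (-(d:ℝ))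
          = C1 * ‖θ - y‖ ^ (α - (d:ℝ)) := by
        rw [hC1_def, show α - (d:ℝ) = α + -(d:ℝ) by ring, Real.rpow_add ha]
        ring
      rw [heq] at hmain
      linarith
    · push_neg at hcase
      have h2 : ‖θ - y‖ ^ (-(d:ℝ)) ≤ e ^ (-(d:ℝ)) :=
        Real.rpow_le_rpow_of_nonpos he hcase hdnn
      by_cases hcase2 : ‖φ - y‖ < e
      · have h1 : (‖y‖ ^ 2 - 1) ^ α ≤ (R + 1) ^ α * ‖φ - y‖ ^ α := by
          rw [← Real.mul_rpow (by linarith) hb.le]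
          refine Real.rpow_le_rpow hsq0 ?_ hα0.le
          have hstep : (‖y‖ + 1) * (‖y‖ - 1) ≤ (R + 1) * ‖φ - y‖ :=
            mul_le_mul (by linarith) hyb (by linarith) (by linarith)
          calc ‖y‖ ^ 2 - 1 = (‖y‖ + 1) * (‖y‖ - 1) := by ring
            _ ≤ (R + 1) * ‖φ - y‖ := hstep
        have hmain : (‖y‖ ^ 2 - 1) ^ α * ‖θ - y‖ ^ (-(d:ℝ)) * ‖φ - y‖ ^ (-(d:ℝ))
            ≤ ((R + 1) ^ α * ‖φ - y‖ ^ α) * e ^ (-(d:ℝ)) * ‖φ - y‖ ^ (-(d:ℝ)) := by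
          refine mul_le_mul (mul_le_mul h1 h2 (rpow_nonneg ha.le _) ?_) le_rfl
            (rpow_nonneg hb.le _) ?_
          · exact mul_nonneg (rpow_nonneg (by linarith) _) (rpow_nonneg hb.le _)
          · exact mul_nonneg (mul_nonneg (rpow_nonneg (by linarith) _) (rpow_nonneg hb.le _))
              (rpow_nonneg he.le _)
        have heq : ((R + 1) ^ α * ‖φ - y‖ ^ α) * e ^ (-(d:ℝ)) * ‖φ - y‖ ^ (-(d:ℝ))
            = C1 * ‖φ - y‖ ^ (α - (d:ℝ)) := by
          rw [hC1_def, show α - (d:ℝ) = α + -(d:ℝ) by ring, Real.rpow_add hb]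
          ring
        rw [heq] at hmain
        linarith
      · push_neg at hcase2
        have h3 : ‖φ - y‖ ^ (-(d:ℝ)) ≤ e ^ (-(d:ℝ)) :=
          Real.rpow_le_rpow_of_nonpos he hcase2 hdnn
        have h1 : (‖y‖ ^ 2 - 1) ^ α ≤ (R ^ 2 - 1) ^ α := by
          refine Real.rpow_le_rpow hsq0 ?_ hα0.le
          have h := pow_le_pow_left₀ (norm_nonneg y) hyR.le 2
          linarith
        have hmain : (‖y‖ ^ 2 - 1) ^ α * ‖θ - y‖ ^ (-(d:ℝ)) * ‖φ - y‖ ^ (-(d:ℝ))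
            ≤ (R ^ 2 - 1) ^ α * e ^ (-(d:ℝ)) * e ^ (-(d:ℝ)) := by
          refine mul_le_mul (mul_le_mul h1 h2 (rpow_nonneg ha.le _) (rpow_nonneg hR2 _)) h3
            (rpow_nonneg hb.le _) ?_
          exact mul_nonneg (rpow_nonneg hR2 _) (rpow_nonneg he.le _)
        have heq : (R ^ 2 - 1) ^ α * e ^ (-(d:ℝ)) * e ^ (-(d:ℝ)) = C2 := by
          rw [hC2_def]; ring
        rw [heq] at hmain
        linarith
  -- set up the integral bounds
  set c1 : ℝ≥0∞ := ENNReal.ofReal C1 with hc1_def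
  set c2 : ℝ≥0∞ := ENNReal.ofReal C2 with hc2_def
  have hc1top : c1 ≠ ⊤ := ENNReal.ofReal_ne_top
  set B : ℝ≥0∞ := ∫⁻ x in Metric.ball (0 : EuclideanSpace ℝ (Fin d)) (R + 1),
    ENNReal.ofReal (‖x‖ ^ (α - (d:ℝ))) ∂volume with hB_def
  have hBfin : B < ⊤ := by
    rw [hB_def]
    refine finite_lint_rpow_ball volume ?_ hαd0 (R + 1)
    rwa [finrank_euclideanSpace_fin]
  have hIc : ∀ c : EuclideanSpace ℝ (Fin d), ‖c‖ = 1 →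
      (∫⁻ y in A, ENNReal.ofReal (‖c - y‖ ^ (α - (d:ℝ))) ∂volume) ≤ B := by
    intro c hc
    have hsub : A ⊆ Metric.ball c (R + 1) := by
      intro y hy
      rw [mem_ball, dist_eq_norm]
      calc ‖y - c‖ ≤ ‖y‖ + ‖c‖ := norm_sub_le _ _
        _ < R + 1 := by rw [hc]; exact add_lt_add_left hy.2 1
    calc (∫⁻ y in A, ENNReal.ofReal (‖c - y‖ ^ (α - (d:ℝ))) ∂volume)
        ≤ ∫⁻ y in Metric.ball c (R + 1), ENNReal.ofReal (‖c - y‖ ^ (α - (d:ℝ))) ∂volume :=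
          lintegral_mono_set hsub
      _ = B := by rw [hB_def]; exact lint_rpow_ball_translate volume _ _ c
  -- inner integral bound
  have inner_bd : ∀ y ∈ A,
      (∫⁻ φ in S, ENNReal.ofReal ((‖y‖ ^ 2 - 1) ^ α * ‖θ - y‖ ^ (-(d:ℝ)) * ‖φ - y‖ ^ (-(d:ℝ)))
          ∂(unifSphere d))
        ≤ c1 * ENNReal.ofReal (‖θ - y‖ ^ (α - (d:ℝ)))
          + ((∫⁻ φ in S, c1 * ENNReal.ofReal (‖φ - y‖ ^ (α - (d:ℝ))) ∂(unifSphere d)) + c2) := by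
    intro y hy
    obtain ⟨hy1, hyR⟩ := hy
    calc (∫⁻ φ in S, ENNReal.ofReal ((‖y‖ ^ 2 - 1) ^ α * ‖θ - y‖ ^ (-(d:ℝ)) * ‖φ - y‖ ^ (-(d:ℝ)))
            ∂(unifSphere d))
        ≤ ∫⁻ φ in S, (c1 * ENNReal.ofReal (‖θ - y‖ ^ (α - (d:ℝ)))
            + (c1 * ENNReal.ofReal (‖φ - y‖ ^ (α - (d:ℝ))) + c2)) ∂(unifSphere d) := by
          refine setLIntegral_mono' hS.measurableSet fun φ hφ => ?_
          have h := key y hy1 hyR φ hφ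
          have t1 : 0 ≤ C1 * ‖θ - y‖ ^ (α - (d:ℝ)) :=
            mul_nonneg hC1n (rpow_nonneg (norm_nonneg _) _)
          have t2 : 0 ≤ C1 * ‖φ - y‖ ^ (α - (d:ℝ)) :=
            mul_nonneg hC1n (rpow_nonneg (norm_nonneg _) _)
          have e1 := ENNReal.ofReal_le_ofReal h
          rw [ENNReal.ofReal_add (by linarith) hC2n, ENNReal.ofReal_add t1 t2,
            ENNReal.ofReal_mul hC1n, ENNReal.ofReal_mul hC1n] at e1
          exact e1.trans (le_of_eq (add_assoc _ _ _))
      _ = (c1 * ENNReal.ofReal (‖θ - y‖ ^ (α - (d:ℝ)))) * (unifSphere d) S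
          + ((∫⁻ φ in S, c1 * ENNReal.ofReal (‖φ - y‖ ^ (α - (d:ℝ))) ∂(unifSphere d))
            + c2 * (unifSphere d) S) := by
          rw [lintegral_add_left measurable_const, lintegral_add_right _ measurable_const,
            lintegral_const, lintegral_const, Measure.restrict_apply_univ]
      _ ≤ c1 * ENNReal.ofReal (‖θ - y‖ ^ (α - (d:ℝ)))
          + ((∫⁻ φ in S, c1 * ENNReal.ofReal (‖φ - y‖ ^ (α - (d:ℝ))) ∂(unifSphere d)) + c2) := by
          refine add_le_add ((mul_le_mul_right hσS _).trans_eq (mul_one _))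
            (add_le_add le_rfl ((mul_le_mul_right hσS _).trans_eq (mul_one _)))
  -- outer integral
  calc (∫⁻ y in A, ∫⁻ φ in S,
          ENNReal.ofReal ((‖y‖ ^ 2 - 1) ^ α * ‖θ - y‖ ^ (-(d:ℝ)) * ‖φ - y‖ ^ (-(d:ℝ)))
          ∂(unifSphere d))
      ≤ ∫⁻ y in A, (c1 * ENNReal.ofReal (‖θ - y‖ ^ (α - (d:ℝ)))
          + ((∫⁻ φ in S, c1 * ENNReal.ofReal (‖φ - y‖ ^ (α - (d:ℝ))) ∂(unifSphere d)) + c2)) :=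
        setLIntegral_mono' hAmeas inner_bd
    _ = (∫⁻ y in A, c1 * ENNReal.ofReal (‖θ - y‖ ^ (α - (d:ℝ))))
        + ∫⁻ y in A, ((∫⁻ φ in S, c1 * ENNReal.ofReal (‖φ - y‖ ^ (α - (d:ℝ))) ∂(unifSphere d))
          + c2) := lintegral_add_left (by fun_prop) _
    _ = (∫⁻ y in A, c1 * ENNReal.ofReal (‖θ - y‖ ^ (α - (d:ℝ))))
        + ((∫⁻ y in A, ∫⁻ φ in S, c1 * ENNReal.ofReal (‖φ - y‖ ^ (α - (d:ℝ))) ∂(unifSphere d))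
          + c2 * volume A) := by
        rw [lintegral_add_right _ measurable_const, lintegral_const, Measure.restrict_apply_univ]
    _ < ⊤ := by
        refine ENNReal.add_lt_top.2 ⟨?_, ENNReal.add_lt_top.2 ⟨?_, ?_⟩⟩
        · rw [lintegral_const_mul' _ _ hc1top]
          exact ENNReal.mul_lt_top ENNReal.ofReal_lt_top (lt_of_le_of_lt (hIc θ hθ) hBfin)
        · rw [lintegral_lintegral_swap (by fun_prop)]
          calc (∫⁻ φ in S, ∫⁻ y in A, c1 * ENNReal.ofReal (‖φ - y‖ ^ (α - (d:ℝ))) ∂volume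
                  ∂(unifSphere d))
              ≤ ∫⁻ φ in S, c1 * B ∂(unifSphere d) := by
                refine setLIntegral_mono' hS.measurableSet fun φ hφ => ?_
                rw [lintegral_const_mul' _ _ hc1top]
                have hφ1 : ‖φ‖ = 1 := by simpa [mem_sphere_zero_iff_norm] using hSsub hφ
                exact mul_le_mul_right (hIc φ hφ1) _
            _ = c1 * B * (unifSphere d) S := by
                rw [lintegral_const, Measure.restrict_apply_univ]
            _ ≤ c1 * B * 1 := mul_le_mul_right hσS _
            _ < ⊤ := by
                rw [mul_one]
                exact ENNReal.mul_lt_top ENNReal.ofReal_lt_top hBfin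
        · refine ENNReal.mul_lt_top ENNReal.ofReal_lt_top ?_
          refine lt_of_le_of_lt (measure_mono ?_) (measure_ball_lt_top (x := (0 : EuclideanSpace ℝ (Fin d))) (r := R))
          intro y hy
          rw [mem_ball_zero_iff]
          exact hy.2
end

section
/- Let d ≥ 2 be an integer, let α be a real number, let θ ∈ ℝ^d with |θ| = 1, and let g : ℝ^d → [0,∞] be a Borel measurable function. Then ∫_{{z ∈ ℝ^d : |z| > 1}} g(z/|z|²) |z|^{−2α} (|z|² − 1)^{α/2} |θ − z|^{−d} dz = ∫_{{y ∈ ℝ^d : 0 < |y| < 1}} g(y) |y|^{α−d} (1 − |y|²)^{α/2} |θ − y|^{−d} dy, where both integrals are with respect to Lebesgue measure on ℝ^d. -/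
open MeasureTheory Metric Set Real Filter

lemma key16 (d : ℕ) (α r m : ℝ) (hr : 1 < r) (hm : 0 < m) :
    r⁻¹ ^ (2 * d) * (r⁻¹ ^ (α - (d : ℝ)) * (1 - r⁻¹ ^ 2) ^ (α / 2) * (m / r) ^ (-(d : ℝ))) =
      r ^ (-2 * α) * (r ^ 2 - 1) ^ (α / 2) * m ^ (-(d : ℝ)) := by
  have hr0 : (0:ℝ) < r := lt_trans one_pos hr
  have h2 : (0:ℝ) ≤ r ^ 2 - 1 := by nlinarith
  have e1 : (1 - r⁻¹ ^ 2) = (r ^ 2 - 1) / r ^ 2 := by field_simp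
  have e2 : (m / r) ^ (-(d:ℝ)) = m ^ (-(d:ℝ)) * r ^ (d:ℝ) := by
    rw [Real.div_rpow hm.le hr0.le, Real.rpow_neg hr0.le (d:ℝ), div_eq_mul_inv, inv_inv]
  have e0 : ((r:ℝ) ^ 2) ^ (α / 2) = r ^ α := by
    rw [← Real.rpow_natCast r 2, ← Real.rpow_mul hr0.le]
    congr 1
    push_cast
    ring
  have e3 : ((r ^ 2 - 1) / r ^ 2) ^ (α / 2) = (r ^ 2 - 1) ^ (α / 2) * r ^ (-α) := by
    rw [Real.div_rpow h2 (by positivity), e0, div_eq_mul_inv, ← Real.rpow_neg hr0.le]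
  have e4 : r⁻¹ ^ (α - (d:ℝ)) = r ^ ((d:ℝ) - α) := by
    rw [Real.inv_rpow hr0.le, ← Real.rpow_neg hr0.le]
    ring_nf
  have e5 : r⁻¹ ^ (2 * d) = r ^ (-(2 * (d:ℝ))) := by
    rw [inv_pow, ← Real.rpow_natCast r (2 * d), ← Real.rpow_neg hr0.le]
    push_cast; ring_nf
  rw [e1, e2, e3, e4, e5,
    show (-2 * α) = (-(2 * (d:ℝ))) + (((d:ℝ) - α) + (-α) + (d:ℝ)) by ring,
    Real.rpow_add hr0, Real.rpow_add hr0, Real.rpow_add hr0]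
  ring

/-- Change of variables under the inversion `K z = z/|z|²`:
`∫_{|z|>1} g(Kz) |z|^{−2α} (|z|²−1)^{α/2} |θ−z|^{−d} dz
   = ∫_{0<|y|<1} g(y) |y|^{α−d} (1−|y|²)^{α/2} |θ−y|^{−d} dy`. -/
theorem stmt16 (d : ℕ) (hd : 2 ≤ d) (α : ℝ)
    (θ : EuclideanSpace ℝ (Fin d)) (hθ : ‖θ‖ = 1)
    (g : EuclideanSpace ℝ (Fin d) → ENNReal) (hg : Measurable g) :
    ∫⁻ z in {z : EuclideanSpace ℝ (Fin d) | 1 < ‖z‖},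
        g ((‖z‖ ^ 2)⁻¹ • z) *
          ENNReal.ofReal (‖z‖ ^ (-2 * α) * (‖z‖ ^ 2 - 1) ^ (α / 2) * ‖θ - z‖ ^ (-(d : ℝ)))
      = ∫⁻ y in {y : EuclideanSpace ℝ (Fin d) | 0 < ‖y‖ ∧ ‖y‖ < 1},
          g y *
            ENNReal.ofReal (‖y‖ ^ (α - d) * (1 - ‖y‖ ^ 2) ^ (α / 2) * ‖θ - y‖ ^ (-(d : ℝ))) := by
  have hdE : Module.finrank ℝ (EuclideanSpace ℝ (Fin d)) = d := finrank_euclideanSpace_fin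
  set f : EuclideanSpace ℝ (Fin d) → EuclideanSpace ℝ (Fin d) :=
    EuclideanGeometry.inversion (0 : EuclideanSpace ℝ (Fin d)) 1 with hfdef
  set f' : EuclideanSpace ℝ (Fin d) → EuclideanSpace ℝ (Fin d) →L[ℝ] EuclideanSpace ℝ (Fin d) :=
    fun z => ((1 : ℝ) / dist z 0) ^ 2 •
      (Submodule.reflection (ℝ ∙ (z - 0))ᗮ : EuclideanSpace ℝ (Fin d) →L[ℝ] EuclideanSpace ℝ (Fin d))
    with hf'def
  set s : Set (EuclideanSpace ℝ (Fin d)) := {z | 1 < ‖z‖} with hsdef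
  have hs : MeasurableSet s := (isOpen_lt continuous_const continuous_norm).measurableSet
  have hne : ∀ z ∈ s, z ≠ 0 := fun z hz h0 => by
    simp only [hsdef, mem_setOf_eq, h0, norm_zero] at hz; linarith
  have hfz : ∀ z : EuclideanSpace ℝ (Fin d), f z = (‖z‖ ^ 2)⁻¹ • z := by
    intro z
    simp only [hfdef, EuclideanGeometry.inversion, vsub_eq_sub, sub_zero, vadd_eq_add, add_zero,
      dist_zero_right, one_div, inv_pow]
  have hnormf : ∀ z : EuclideanSpace ℝ (Fin d), ‖f z‖ = ‖z‖⁻¹ := by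
    intro z
    have := EuclideanGeometry.dist_inversion_center (0 : EuclideanSpace ℝ (Fin d)) z 1
    simpa [one_div] using this
  have hfinv : ∀ z : EuclideanSpace ℝ (Fin d), f (f z) = z := fun z =>
    EuclideanGeometry.inversion_inversion (0 : EuclideanSpace ℝ (Fin d)) one_ne_zero z
  have hθ0 : θ ≠ 0 := by
    intro h
    rw [h, norm_zero] at hθ
    exact one_ne_zero hθ.symm
  have hθf : f θ = θ :=
    EuclideanGeometry.inversion_of_mem_sphere (by simp [mem_sphere_zero_iff_norm, hθ])
  have hdistf : ∀ z : EuclideanSpace ℝ (Fin d), z ≠ 0 → ‖θ - f z‖ = ‖θ - z‖ / ‖z‖ := by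
    intro z hz
    have h := EuclideanGeometry.dist_inversion_inversion
      (c := (0 : EuclideanSpace ℝ (Fin d))) hθ0 hz 1
    rw [← hfdef] at h
    rw [hθf] at h
    rw [div_eq_inv_mul]
    simpa [dist_eq_norm, hθ] using h
  have himg : f '' s = {y : EuclideanSpace ℝ (Fin d) | 0 < ‖y‖ ∧ ‖y‖ < 1} := by
    ext y
    constructor
    · rintro ⟨z, hz, rfl⟩
      have h1 : (1:ℝ) < ‖z‖ := hz
      refine ⟨?_, ?_⟩
      · rw [hnormf]
        have : (0:ℝ) < ‖z‖ := lt_trans one_pos h1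
        positivity
      · rw [hnormf]; exact inv_lt_one_of_one_lt₀ h1
    · rintro ⟨h0, h1⟩
      refine ⟨f y, ?_, hfinv y⟩
      show 1 < ‖f y‖
      rw [hnormf]
      exact (one_lt_inv₀ h0).2 h1
  have hf' : ∀ z ∈ s, HasFDerivWithinAt f (f' z) s z := fun z hz =>
    (EuclideanGeometry.hasFDerivAt_inversion (hne z hz)).hasFDerivWithinAt
  have hinj : InjOn f s :=
    (EuclideanGeometry.inversion_injective (0 : EuclideanSpace ℝ (Fin d)) one_ne_zero).injOn
  have hdet : ∀ z : EuclideanSpace ℝ (Fin d), z ≠ 0 → |(f' z).det| = ‖z‖⁻¹ ^ (2 * d) := by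
    intro z hz
    have hKcompl : (ℝ ∙ (z - 0))ᗮᗮ = ℝ ∙ (z - 0) := Submodule.orthogonal_orthogonal _
    have hfr : Module.finrank ℝ (ℝ ∙ (z - 0)) = 1 :=
      finrank_span_singleton (by simpa using hz)
    have hdetv : (f' z).det = (((1:ℝ) / dist z 0) ^ 2) ^ d * (-1) := by
      rw [hf'def]
      simp only [ContinuousLinearMap.det]
      rw [ContinuousLinearMap.coe_smul, LinearMap.det_smul, hdE]
      congr 1
      have hcoe : ((Submodule.reflection (ℝ ∙ (z - 0))ᗮ :
            EuclideanSpace ℝ (Fin d) →L[ℝ] EuclideanSpace ℝ (Fin d)) :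
            EuclideanSpace ℝ (Fin d) →ₗ[ℝ] EuclideanSpace ℝ (Fin d))
          = (Submodule.reflection (ℝ ∙ (z - 0))ᗮ).toLinearMap := rfl
      rw [hcoe, Submodule.det_reflection, hKcompl, hfr, pow_one]
    rw [hdetv, abs_mul, abs_neg, abs_one, mul_one, abs_pow, abs_pow, dist_zero_right,
      abs_of_nonneg (by positivity : (0:ℝ) ≤ 1 / ‖z‖), one_div, ← pow_mul]
  rw [← himg, lintegral_image_eq_lintegral_abs_det_fderiv_mul volume hs hf' hinj]
  refine setLIntegral_congr_fun hs (fun z hz => ?_)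
  have hz1 : (1:ℝ) < ‖z‖ := hz
  have hz0 : z ≠ 0 := hne z hz
  have hm : (0:ℝ) < ‖θ - z‖ := by
    rw [norm_sub_pos_iff]
    intro h; rw [h] at hθ; linarith
  rw [hdet z hz0, hnormf, hdistf z hz0, hfz z]
  rw [mul_left_comm, ← ENNReal.ofReal_mul (by positivity)]
  congr 1
  exact congrArg ENNReal.ofReal (key16 d α ‖z‖ ‖θ - z‖ hz1 hm).symm
end
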